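/- The function P₂(x) = λ Σᵢ ∫₀^{|xᵢ|} [min{θλ, s} - λ]₊ / ((θ-1)λ) ds (the concave part of the SCAD regularizer) is continuously differentiable with ∇ᵢP₂(x) = sign(xᵢ)·[min{θλ, |xᵢ|} - λ]₊/(θ-1), and ∇P₂ is Lipschitz continuous with modulus 1/(θ-1). -/

import Mathlib

open intervalIntegral Real

set_option maxHeartbeats 1600000

/-- The concave part of the SCAD regularizer is `C¹` with the given gradient, which is
`1/(θ-1)`-Lipschitz. -/
theorem stmt9 {n : ℕ} (lam θ : ℝ) (hlam : 0 < lam) (hθ : 2 < θ)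
    (P₂ : EuclideanSpace ℝ (Fin n) → ℝ)
    (hP₂ : ∀ x, P₂ x = lam * ∑ i,
      ∫ s in (0:ℝ)..|x i|, max (min (θ * lam) s - lam) 0 / ((θ - 1) * lam))
    (G : EuclideanSpace ℝ (Fin n) → EuclideanSpace ℝ (Fin n))
    (hG : ∀ x i, G x i = Real.sign (x i) * max (min (θ * lam) |x i| - lam) 0 / (θ - 1)) :
    (∀ x, HasGradientAt P₂ (G x) x) ∧ Continuous G ∧
      LipschitzWith (1 / (θ - 1)).toNNReal G := by
  have hθ1 : (0:ℝ) < θ - 1 := by linarith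
  have hθ1' : θ - 1 ≠ 0 := ne_of_gt hθ1
  have hlam' : lam ≠ 0 := ne_of_gt hlam
  have htl : lam < θ * lam := by nlinarith
  -- the scalar gradient function
  set g : ℝ → ℝ := fun t => Real.sign t * max (min (θ * lam) |t| - lam) 0 / (θ - 1) with hg
  -- alternative formula for `g` making continuity and Lipschitzness evident
  set v : ℝ → ℝ := fun t =>
    min (θ * lam - lam) (max (-(θ * lam - lam)) (max (t - lam) (min (t + lam) 0))) with hv
  have key : ∀ t : ℝ, 0 ≤ t → max (min (θ * lam) t - lam) 0 = v t := by
    intro t ht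
    simp only [hv, min_def, max_def]
    split_ifs <;> linarith
  have hvodd : ∀ t : ℝ, v (-t) = -v t := by
    intro t
    simp only [hv, min_def, max_def]
    split_ifs <;> linarith
  have hgv : ∀ t, g t = v t / (θ - 1) := by
    intro t
    rcases lt_trichotomy t 0 with ht | ht | ht
    · simp only [hg, Real.sign_of_neg ht, abs_of_neg ht]
      rw [key (-t) (by linarith), hvodd]
      ring
    · subst ht
      simp only [hg, Real.sign_zero, abs_zero, zero_mul, zero_div]
      have h0 : v 0 = 0 := by
        rw [← key 0 le_rfl]
        have : min (θ * lam) 0 - lam ≤ 0 := by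
          have := min_le_right (θ * lam) (0:ℝ); linarith
        rw [max_eq_right this]
      rw [h0, zero_div]
    · simp only [hg, Real.sign_of_pos ht, abs_of_pos ht, one_mul]
      rw [key t (le_of_lt ht)]
  -- `v` is 1-Lipschitz
  have hvlip : LipschitzWith 1 v := by
    have l1 : LipschitzWith 1 (fun t : ℝ => t - lam) := by
      apply LipschitzWith.of_dist_le_mul
      intro x y
      have h : x - lam - (y - lam) = x - y := by ring
      simp only [Real.dist_eq, NNReal.coe_one, one_mul, h]
      exact le_rfl
    have l2 : LipschitzWith 1 (fun t : ℝ => t + lam) := by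
      apply LipschitzWith.of_dist_le_mul
      intro x y
      have h : x + lam - (y + lam) = x - y := by ring
      simp only [Real.dist_eq, NNReal.coe_one, one_mul, h]
      exact le_rfl
    have l3 : LipschitzWith 1 (fun t : ℝ => min (t + lam) 0) := l2.min_const 0
    have l4 : LipschitzWith 1 (fun t : ℝ => max (t - lam) (min (t + lam) 0)) := by
      simpa using l1.max l3
    exact ((l4.const_max _).const_min _)
  -- pointwise Lipschitz bound for `g`
  have hglip : ∀ s t : ℝ, |g s - g t| ≤ (θ - 1)⁻¹ * |s - t| := by
    intro s t
    have hvv : |v s - v t| ≤ |s - t| := by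
      have := hvlip.dist_le_mul s t
      simpa [Real.dist_eq] using this
    rw [hgv s, hgv t, div_sub_div_same, abs_div, abs_of_pos hθ1]
    calc |v s - v t| / (θ - 1) ≤ |s - t| / (θ - 1) := by gcongr
      _ = (θ - 1)⁻¹ * |s - t| := by ring
  have hgcont : Continuous g := by
    have hc : Continuous fun t => v t / (θ - 1) := hvlip.continuous.div_const _
    have he : g = fun t => v t / (θ - 1) := funext hgv
    rw [he]
    exact hc
  -- the scalar antiderivative
  set Φ : ℝ → ℝ := fun t => ∫ s in (0:ℝ)..t, g s with hΦ
  have hΦd : ∀ t, HasDerivAt Φ (g t) t := fun t =>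
    intervalIntegral.integral_hasDerivAt_right (hgcont.intervalIntegrable _ _)
      (hgcont.stronglyMeasurableAtFilter _ _) hgcont.continuousAt
  -- `Φ` is even since `g` is odd
  have hgodd : ∀ t, g (-t) = -g t := by
    intro t
    rw [hg]
    simp only [Real.sign_neg, abs_neg]
    ring
  have hΦeven : ∀ t, Φ (-t) = Φ t := by
    intro t
    have h1 := intervalIntegral.integral_comp_neg (a := -t) (b := (0:ℝ)) g
    simp only [neg_zero, neg_neg] at h1
    have h2 : (∫ s in (-t)..(0:ℝ), g (-s)) = ∫ s in (-t)..(0:ℝ), -g s :=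
      intervalIntegral.integral_congr fun s _ => hgodd s
    rw [h2, intervalIntegral.integral_neg] at h1
    have h3 : (∫ s in (0:ℝ)..(-t), g s) = -∫ s in (-t)..(0:ℝ), g s :=
      intervalIntegral.integral_symm _ _
    show (∫ s in (0:ℝ)..(-t), g s) = ∫ s in (0:ℝ)..t, g s
    rw [h3]
    exact h1
  -- rewrite `P₂` as a sum of `Φ`'s
  have hP : ∀ x : EuclideanSpace ℝ (Fin n), P₂ x = ∑ i, Φ (x i) := by
    intro x
    rw [hP₂, Finset.mul_sum]
    refine Finset.sum_congr rfl fun i _ => ?_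
    have habs : (0:ℝ) ≤ |x i| := abs_nonneg _
    have step1 : lam * ∫ s in (0:ℝ)..|x i|, max (min (θ * lam) s - lam) 0 / ((θ - 1) * lam)
        = ∫ s in (0:ℝ)..|x i|, g s := by
      rw [← intervalIntegral.integral_const_mul]
      apply intervalIntegral.integral_congr
      intro s hs
      rw [Set.uIcc_of_le habs] at hs
      obtain ⟨hs0, _⟩ := hs
      have hgs : g s = max (min (θ * lam) s - lam) 0 / (θ - 1) := by
        rcases eq_or_lt_of_le hs0 with h0 | h0
        · simp only [hg, ← h0, Real.sign_zero, abs_zero, zero_mul, zero_div]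
          have h5 : min (θ * lam) 0 - lam ≤ 0 := by
            have := min_le_right (θ * lam) (0:ℝ); linarith
          rw [max_eq_right h5, zero_div]
        · simp only [hg, Real.sign_of_pos h0, abs_of_pos h0, one_mul]
      rw [hgs]
      field_simp
      try ring
    rw [step1]
    rcases abs_cases (x i) with ⟨h, _⟩ | ⟨h, _⟩
    · rw [h]
    · rw [h, ← hΦeven (x i)]
  -- Lipschitz bound on `G`
  have hK : ((1 / (θ - 1) : ℝ).toNNReal : ℝ) = 1 / (θ - 1) :=
    Real.coe_toNNReal _ (by positivity)
  have hGlip : LipschitzWith (1 / (θ - 1)).toNNReal G := by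
    apply LipschitzWith.of_dist_le_mul
    intro x y
    rw [EuclideanSpace.dist_eq, EuclideanSpace.dist_eq, hK]
    have key : ∀ i, dist (G x i) (G y i) ^ 2 ≤ (θ - 1)⁻¹ ^ 2 * dist (x i) (y i) ^ 2 := by
      intro i
      have h1 : dist (G x i) (G y i) ≤ (θ - 1)⁻¹ * dist (x i) (y i) := by
        rw [hG, hG, Real.dist_eq, Real.dist_eq]
        exact hglip (x i) (y i)
      have h2 : (0:ℝ) ≤ dist (G x i) (G y i) := dist_nonneg
      calc dist (G x i) (G y i) ^ 2 ≤ ((θ - 1)⁻¹ * dist (x i) (y i)) ^ 2 := by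
            apply sq_le_sq' _ h1; linarith
        _ = (θ - 1)⁻¹ ^ 2 * dist (x i) (y i) ^ 2 := by ring
    calc √(∑ i, dist (G x i) (G y i) ^ 2)
        ≤ √(∑ i, (θ - 1)⁻¹ ^ 2 * dist (x i) (y i) ^ 2) := by
          apply Real.sqrt_le_sqrt
          exact Finset.sum_le_sum fun i _ => key i
      _ = √((θ - 1)⁻¹ ^ 2) * √(∑ i, dist (x i) (y i) ^ 2) := by
          rw [← Finset.mul_sum, Real.sqrt_mul (by positivity)]
      _ = 1 / (θ - 1) * √(∑ i, dist (x i) (y i) ^ 2) := by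
          rw [Real.sqrt_sq (by positivity)]
          ring_nf
  refine ⟨?_, hGlip.continuous, hGlip⟩
  -- the gradient statement
  intro x
  rw [hasGradientAt_iff_hasFDerivAt]
  have hcoord : ∀ i : Fin n,
      HasFDerivAt (fun y : EuclideanSpace ℝ (Fin n) => Φ (y i))
        (g (x i) • (EuclideanSpace.proj i : EuclideanSpace ℝ (Fin n) →L[ℝ] ℝ)) x := by
    intro i
    have hproj : HasFDerivAt (fun y : EuclideanSpace ℝ (Fin n) => y i)
        (EuclideanSpace.proj i : EuclideanSpace ℝ (Fin n) →L[ℝ] ℝ) x :=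
      (EuclideanSpace.proj i : EuclideanSpace ℝ (Fin n) →L[ℝ] ℝ).hasFDerivAt
    exact (hΦd (x i)).comp_hasFDerivAt x hproj
  have hsum : HasFDerivAt (fun y : EuclideanSpace ℝ (Fin n) => ∑ i, Φ (y i))
      (∑ i, g (x i) • (EuclideanSpace.proj i : EuclideanSpace ℝ (Fin n) →L[ℝ] ℝ)) x :=
    HasFDerivAt.fun_sum fun i _ => hcoord i
  have heq : (fun y : EuclideanSpace ℝ (Fin n) => ∑ i, Φ (y i)) = P₂ := by
    funext y; exact (hP y).symm
  rw [heq] at hsum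
  refine (hsum.congr_fderiv ?_)
  symm
  apply ContinuousLinearMap.ext
  intro y
  rw [InnerProductSpace.toDual_apply_apply, PiLp.inner_apply]
  simp only [ContinuousLinearMap.sum_apply, ContinuousLinearMap.coe_smul', Pi.smul_apply,
    PiLp.proj_apply, RCLike.inner_apply, conj_trivial, smul_eq_mul]
  refine Finset.sum_congr rfl fun i _ => ?_
  have hgx : Real.sign (x i) * max (min (θ * lam) |x i| - lam) 0 / (θ - 1) = g (x i) := by
    simp only [hg]
  rw [hG, hgx, mul_comm]
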